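/- arXiv:1901.09174 — 6 statements merged into one kernel-verified Lean document; each statement's English description precedes it below -/
import Mathlib

section
/- (Second moment bound for the importance sampling estimator, real case.) Let N be a positive integer, λ_1, …, λ_N positive reals, α_1, …, α_N reals, and γ_0 > 0. Set σ_i = √(γ_0/(N λ_i)) and let ν be the product over i of the Gaussian measures on ℝ with mean −α_i and variance σ_i². Let L(z) = Π_{i=1}^N σ_i exp( (z_i + α_i)²/(2σ_i²) − z_i²/2 ). Then ∫_{ℝᴺ} 1{ Σ_{i=1}^N λ_i (z_i + α_i)² ≤ γ_0 } · L(z)² dν(z) ≤ (γ_0/N)^{N} · ( Π_{i=1}^N λ_i^{−1} ) · e^{N}. -/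
open MeasureTheory ProbabilityTheory Real

/-- Second moment bound for the importance sampling estimator
(real case): with `σᵢ = √(γ₀/(N λᵢ))` and biased measure `ν = ⊗ᵢ N(−αᵢ, σᵢ²)`,
`∫ 1{∑ λᵢ(zᵢ+αᵢ)² ≤ γ₀} L(z)² dν ≤ (γ₀/N)^N (∏ᵢ λᵢ⁻¹) e^N`. -/
theorem importance_sampling_second_moment_bound_real
    (N : ℕ) (hN : 0 < N) (lam α σ : Fin N → ℝ) (hlam : ∀ i, 0 < lam i)
    (γ₀ : ℝ) (hγ₀ : 0 < γ₀)
    (hσ : ∀ i, σ i = Real.sqrt (γ₀ / (N * lam i)))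
    (ν : Measure (Fin N → ℝ))
    (hν : ν = Measure.pi fun i => gaussianReal (-α i) (Real.toNNReal (σ i ^ 2)))
    (L : (Fin N → ℝ) → ℝ)
    (hL : L = fun z => ∏ i, σ i * Real.exp ((z i + α i) ^ 2 / (2 * σ i ^ 2)
      - z i ^ 2 / 2)) :
    ∫ z : Fin N → ℝ,
        Set.indicator {z : Fin N → ℝ | ∑ i, lam i * (z i + α i) ^ 2 ≤ γ₀}
          (fun z => L z ^ 2) z ∂ν
      ≤ (γ₀ / N) ^ N * (∏ i, (lam i)⁻¹) * Real.exp N := by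
  have hNpos : (0:ℝ) < N := Nat.cast_pos.mpr hN
  have hσsq : ∀ i, σ i ^ 2 = γ₀ / (N * lam i) := by
    intro i
    rw [hσ i, Real.sq_sqrt]
    have := hlam i
    positivity
  have hσpos : ∀ i, 0 < σ i := by
    intro i
    rw [hσ i]
    apply Real.sqrt_pos.mpr
    have := hlam i
    positivity
  set C : ℝ := (γ₀ / N) ^ N * (∏ i, (lam i)⁻¹) * Real.exp N with hC
  have hCpos : 0 < C := by
    have h : 0 < ∏ i, (lam i)⁻¹ :=
      Finset.prod_pos fun i _ => inv_pos.mpr (hlam i)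
    positivity
  subst hν hL
  haveI : IsProbabilityMeasure
      (Measure.pi fun i => gaussianReal (-α i) (Real.toNNReal (σ i ^ 2))) :=
    inferInstance
  have hbound : ∀ z : Fin N → ℝ,
      Set.indicator {z : Fin N → ℝ | ∑ i, lam i * (z i + α i) ^ 2 ≤ γ₀}
        (fun z => (∏ i, σ i * Real.exp ((z i + α i) ^ 2 / (2 * σ i ^ 2)
          - z i ^ 2 / 2)) ^ 2) z ≤ C := by
    intro z
    by_cases hz : z ∈ {z : Fin N → ℝ | ∑ i, lam i * (z i + α i) ^ 2 ≤ γ₀}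
    · rw [Set.indicator_of_mem hz]
      have key : (∏ i, σ i * Real.exp ((z i + α i) ^ 2 / (2 * σ i ^ 2)
          - z i ^ 2 / 2)) ^ 2
          = (∏ i, σ i ^ 2) * Real.exp (∑ i, ((z i + α i) ^ 2 / σ i ^ 2 - z i ^ 2)) := by
        rw [← Finset.prod_pow, Real.exp_sum, ← Finset.prod_mul_distrib]
        congr 1
        funext i
        rw [mul_pow, ← Real.exp_nat_mul]
        congr 2
        have hσ2 : σ i ^ 2 ≠ 0 := (pow_pos (hσpos i) 2).ne'
        field_simp
        ring
      rw [key]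
      have hprodσ : (∏ i, σ i ^ 2) = (γ₀ / N) ^ N * ∏ i, (lam i)⁻¹ := by
        have hcard : (γ₀ / (N:ℝ)) ^ N = ∏ _i : Fin N, (γ₀ / (N:ℝ)) := by
          simp
          rw [div_pow]
        rw [hcard, ← Finset.prod_mul_distrib]
        refine Finset.prod_congr rfl fun i _ => ?_
        rw [hσsq i]
        field_simp
      have hsum : (∑ i, ((z i + α i) ^ 2 / σ i ^ 2 - z i ^ 2)) ≤ N := by
        have h1 : (∑ i, ((z i + α i) ^ 2 / σ i ^ 2 - z i ^ 2))
            ≤ ∑ i, (z i + α i) ^ 2 / σ i ^ 2 := by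
          apply Finset.sum_le_sum
          intro i _
          nlinarith [sq_nonneg (z i)]
        have h2 : ∑ i, (z i + α i) ^ 2 / σ i ^ 2
            = (N / γ₀) * ∑ i, lam i * (z i + α i) ^ 2 := by
          rw [Finset.mul_sum]
          refine Finset.sum_congr rfl fun i _ => ?_
          rw [hσsq i]
          have := (hlam i).ne'
          field_simp
        have h3 : (N / γ₀) * ∑ i, lam i * (z i + α i) ^ 2 ≤ (N / γ₀) * γ₀ := by
          apply mul_le_mul_of_nonneg_left hz
          positivity
        have h4 : (N : ℝ) / γ₀ * γ₀ = N := by field_simp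
        linarith [h1, h2 ▸ h1]
      rw [hprodσ, hC]
      have hp : 0 ≤ (γ₀ / N) ^ N * ∏ i, (lam i)⁻¹ := by
        have h : 0 < ∏ i, (lam i)⁻¹ :=
          Finset.prod_pos fun i _ => inv_pos.mpr (hlam i)
        positivity
      exact mul_le_mul_of_nonneg_left (Real.exp_le_exp.mpr hsum) hp
    · rw [Set.indicator_of_notMem hz]
      exact hCpos.le
  calc ∫ z : Fin N → ℝ,
        Set.indicator {z : Fin N → ℝ | ∑ i, lam i * (z i + α i) ^ 2 ≤ γ₀}
          (fun z => (∏ i, σ i * Real.exp ((z i + α i) ^ 2 / (2 * σ i ^ 2)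
            - z i ^ 2 / 2)) ^ 2) z
          ∂(Measure.pi fun i => gaussianReal (-α i) (Real.toNNReal (σ i ^ 2)))
      ≤ ∫ _ : Fin N → ℝ, C
          ∂(Measure.pi fun i => gaussianReal (-α i) (Real.toNNReal (σ i ^ 2))) := by
        apply integral_mono_of_nonneg
        · filter_upwards with z
          apply Set.indicator_nonneg
          intro x _
          positivity
        · exact integrable_const C
        · filter_upwards with z using hbound z
    _ = C := by simp
end

section
/- (Proposition 2: bounded relative error of the importance sampling estimator, noncentral real case.) Let N be a positive integer, λ_1, …, λ_N positive reals, α_1, …, α_N reals, and for γ_0 > 0 set σ_i = √(γ_0/(N λ_i)), let ν_{γ_0} be the product over i of the Gaussian measures on ℝ with mean −α_i and variance σ_i², let L(z) = Π_{i=1}^N σ_i exp( (z_i + α_i)²/(2σ_i²) − z_i²/2 ), and let P(γ_0) = P( Σ_{i=1}^N λ_i (Z_i + α_i)² ≤ γ_0 ) for i.i.d. standard Gaussians Z_1, …, Z_N. Then limsup_{γ_0 → 0⁺} [ ∫_{ℝᴺ} 1{ Σ_i λ_i (z_i + α_i)² ≤ γ_0 } L(z)² dν_{γ_0}(z) ]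 / P(γ_0)² ≤ (π/2)^N · e^{N} · exp( Σ_{i=1}^N α_i² ); in particular this limsup is finite, so the importance sampling estimator has bounded relative error. -/
open MeasureTheory ProbabilityTheory Filter Real
open scoped NNReal ENNReal

lemma IS_lintegral_pi_prod {ι : Type*} [Fintype ι] [DecidableEq ι]
    (μ : ι → Measure ℝ) [∀ i, SigmaFinite (μ i)]
    (f : ι → ℝ → ENNReal) (hf : ∀ i, Measurable (f i)) :
    ∫⁻ x : ι → ℝ, ∏ i, f i (x i) ∂Measure.pi μ = ∏ i, ∫⁻ y, f i y ∂μ i := by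
  have hF : Measurable fun x : ι → ℝ => ∏ i, f i (x i) :=
    Finset.measurable_prod _ fun i _ => (hf i).comp (measurable_pi_apply i)
  have key : ∀ s : Finset ι, ∀ x : ι → ℝ,
      (∫⋯∫⁻_s, (fun x => ∏ i, f i (x i)) ∂μ) x
        = (∏ i ∈ s, ∫⁻ y, f i y ∂μ i) * ∏ i ∈ sᶜ, f i (x i) := by
    intro s
    induction s using Finset.induction with
    | empty => intro x; simp [MeasureTheory.lmarginal_empty]
    | @insert i s hi ih =>
      intro x
      rw [MeasureTheory.lmarginal_insert _ hF hi]
      have hcompl : sᶜ = insert i (insert i s)ᶜ := by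
        ext j
        by_cases hj : j = i <;> simp [hj, hi]
      have hnotmem : i ∉ (insert i s)ᶜ := by simp
      calc ∫⁻ xi, (∫⋯∫⁻_s, (fun x => ∏ i, f i (x i)) ∂μ) (Function.update x i xi) ∂μ i
          = ∫⁻ xi, (∏ j ∈ s, ∫⁻ y, f j y ∂μ j) *
              (f i xi * ∏ j ∈ (insert i s)ᶜ, f j (x j)) ∂μ i := by
            congr 1; ext xi
            rw [ih]
            congr 1
            rw [hcompl, Finset.prod_insert hnotmem]
            congr 1
            · simp [Function.update_self]
            · refine Finset.prod_congr rfl fun j hj => ?_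
              have : j ≠ i := by
                intro h; exact (hnotmem (h ▸ hj))
              rw [Function.update_of_ne this]
        _ = (∏ j ∈ insert i s, ∫⁻ y, f j y ∂μ j) * ∏ j ∈ (insert i s)ᶜ, f j (x j) := by
            rw [lintegral_const_mul _ ((hf i).mul_const _),
              lintegral_mul_const _ (hf i), Finset.prod_insert hi]
            ring
  have h := key Finset.univ (fun _ => 0)
  rw [MeasureTheory.lmarginal_univ] at h
  simpa using h

lemma IS_pi_withDensity {ι : Type*} [Fintype ι] [DecidableEq ι]
    (μ : ι → Measure ℝ) [∀ i, SigmaFinite (μ i)]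
    (f : ι → ℝ → ENNReal) (hf : ∀ i, Measurable (f i))
    [∀ i, SigmaFinite ((μ i).withDensity (f i))] :
    Measure.pi (fun i => (μ i).withDensity (f i))
      = (Measure.pi μ).withDensity (fun x => ∏ i, f i (x i)) := by
  refine Measure.pi_eq fun s hs => ?_
  rw [withDensity_apply _ (MeasurableSet.univ_pi hs),
    ← lintegral_indicator (MeasurableSet.univ_pi hs)]
  have : (Set.univ.pi s).indicator (fun x : ι → ℝ => ∏ i, f i (x i))
      = fun x => ∏ i, (s i).indicator (f i) (x i) := by
    ext x
    by_cases hx : x ∈ Set.univ.pi s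
    · rw [Set.indicator_of_mem hx]
      exact Finset.prod_congr rfl fun i _ =>
        (Set.indicator_of_mem (hx i (Set.mem_univ i)) _).symm
    · rw [Set.indicator_of_notMem hx]
      rw [Set.mem_univ_pi] at hx
      push_neg at hx
      obtain ⟨j, hj⟩ := hx
      exact (Finset.prod_eq_zero (Finset.mem_univ j)
        (by rw [Set.indicator_of_notMem hj])).symm
  rw [this, IS_lintegral_pi_prod μ _ fun i => (hf i).indicator (hs i)]
  exact Finset.prod_congr rfl fun i _ => by
    rw [lintegral_indicator (hs i), withDensity_apply _ (hs i)]


set_option maxHeartbeats 1000000 in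
lemma IS_ratio_bound
    (N : ℕ) (hN : 0 < N) (lam α : Fin N → ℝ) (hlam : ∀ i, 0 < lam i)
    (γ₀ : ℝ) (hγ : 0 < γ₀) :
    (∫ z : Fin N → ℝ,
        Set.indicator {z : Fin N → ℝ | ∑ i, lam i * (z i + α i) ^ 2 ≤ γ₀}
          (fun z => (∏ i, Real.sqrt (γ₀ / (N * lam i)) *
            Real.exp ((z i + α i) ^ 2 / (2 * Real.sqrt (γ₀ / (N * lam i)) ^ 2)
              - z i ^ 2 / 2)) ^ 2) z
        ∂(Measure.pi fun i => gaussianReal (-α i)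
            (Real.toNNReal (Real.sqrt (γ₀ / (N * lam i)) ^ 2))))
      / ((Measure.pi fun _ : Fin N => gaussianReal 0 1)
          {z : Fin N → ℝ | ∑ i, lam i * (z i + α i) ^ 2 ≤ γ₀}).toReal ^ 2
    ≤ Real.exp N * (Real.sqrt (2 * π) / 2) ^ N *
        Real.exp (∑ i, (|α i| + Real.sqrt (γ₀ / lam i)) ^ 2) := by
  classical
  set τ : ℝ := Real.sqrt (2 * π) with hτdef
  have hτ : 0 < τ := Real.sqrt_pos.mpr (by positivity)
  set s : Fin N → ℝ := fun i => Real.sqrt (γ₀ / (N * lam i)) with hsdef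
  have hNR : (0:ℝ) < N := Nat.cast_pos.mpr hN
  have hs_pos : ∀ i, 0 < s i := fun i =>
    Real.sqrt_pos.mpr (div_pos hγ (mul_pos hNR (hlam i)))
  have hs_sq : ∀ i, s i ^ 2 = γ₀ / (N * lam i) := fun i =>
    Real.sq_sqrt (div_pos hγ (mul_pos hNR (hlam i))).le
  set r : Fin N → ℝ := fun i => Real.sqrt (γ₀ / lam i) with hrdef
  have hr_pos : ∀ i, 0 < r i := fun i => Real.sqrt_pos.mpr (div_pos hγ (hlam i))
  set w : Fin N → ℝ := fun i => (|α i| + r i) ^ 2 with hwdef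
  set S : ℝ := ∑ i, w i with hSdef
  set A : Set (Fin N → ℝ) := {z | ∑ i, lam i * (z i + α i) ^ 2 ≤ γ₀} with hAdef
  have hA : MeasurableSet A := by
    apply measurableSet_le _ measurable_const
    exact Finset.measurable_sum _ fun i _ => by
      fun_prop
  -- membership facts
  have hzA : ∀ z ∈ A, ∀ i, |z i + α i| ≤ r i := by
    intro z hz i
    have hterm : lam i * (z i + α i) ^ 2 ≤ γ₀ := by
      refine le_trans ?_ hz
      exact Finset.single_le_sum (f := fun j => lam j * (z j + α j) ^ 2)
        (fun j _ => mul_nonneg (hlam j).le (sq_nonneg _)) (Finset.mem_univ i)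
    have h2 : (z i + α i) ^ 2 ≤ γ₀ / lam i := by
      rw [le_div_iff₀ (hlam i)]; linarith [hterm]
    calc |z i + α i| = Real.sqrt ((z i + α i) ^ 2) := (Real.sqrt_sq_eq_abs _).symm
      _ ≤ r i := Real.sqrt_le_sqrt h2
  have hz_sq : ∀ z ∈ A, ∀ i, z i ^ 2 ≤ w i := by
    intro z hz i
    have h1 : |z i| ≤ |α i| + r i := by
      have := hzA z hz i
      have habs : |z i| ≤ |z i + α i| + |α i| := by
        have : z i = (z i + α i) + -(α i) := by ring
        calc |z i| = |(z i + α i) + -(α i)| := by rw [← this]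
          _ ≤ |z i + α i| + |-(α i)| := abs_add_le _ _
          _ = |z i + α i| + |α i| := by rw [abs_neg]
      linarith
    calc z i ^ 2 = |z i| ^ 2 := (sq_abs _).symm
      _ ≤ (|α i| + r i) ^ 2 := by
          apply pow_le_pow_left₀ (abs_nonneg _) h1
  -- volume bounds
  set volA : ENNReal := (Measure.pi fun _ : Fin N => (volume : Measure ℝ)) A with hvolAdef
  have hBsub : (Set.univ.pi fun i => Set.Icc (-α i - s i) (-α i + s i)) ⊆ A := by
    intro z hz
    have hzi : ∀ i, lam i * (z i + α i) ^ 2 ≤ γ₀ / N := by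
      intro i
      have h1 := hz i (Set.mem_univ i)
      simp only [Set.mem_Icc] at h1
      have habs : |z i + α i| ≤ s i := abs_le.mpr ⟨by linarith [h1.1], by linarith [h1.2]⟩
      have hsq : (z i + α i) ^ 2 ≤ s i ^ 2 := by
        calc (z i + α i) ^ 2 = |z i + α i| ^ 2 := (sq_abs _).symm
          _ ≤ s i ^ 2 := pow_le_pow_left₀ (abs_nonneg _) habs 2
      rw [hs_sq i] at hsq
      calc lam i * (z i + α i) ^ 2 ≤ lam i * (γ₀ / (N * lam i)) :=
            mul_le_mul_of_nonneg_left hsq (hlam i).le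
        _ = γ₀ / N := by field_simp [hNR.ne', (hlam i).ne']
    show ∑ i, lam i * (z i + α i) ^ 2 ≤ γ₀
    calc ∑ i, lam i * (z i + α i) ^ 2 ≤ ∑ _i : Fin N, γ₀ / N :=
          Finset.sum_le_sum fun i _ => hzi i
      _ = γ₀ := by
          rw [Finset.sum_const, Finset.card_univ, Fintype.card_fin, nsmul_eq_mul]
          field_simp
  have hCsub : A ⊆ Set.univ.pi fun i => Set.Icc (-α i - r i) (-α i + r i) := by
    intro z hz i _
    have := hzA z hz i
    rw [abs_le] at this
    exact Set.mem_Icc.mpr ⟨by linarith [this.1], by linarith [this.2]⟩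
  have hvolA_lb : ENNReal.ofReal (∏ i, 2 * s i) ≤ volA := by
    calc ENNReal.ofReal (∏ i, 2 * s i)
        = ∏ i, ENNReal.ofReal (2 * s i) :=
          ENNReal.ofReal_prod_of_nonneg fun i _ => by positivity
      _ = (Measure.pi fun _ : Fin N => (volume : Measure ℝ))
            (Set.univ.pi fun i => Set.Icc (-α i - s i) (-α i + s i)) := by
          rw [Measure.pi_pi]
          refine Finset.prod_congr rfl fun i _ => ?_
          rw [Real.volume_Icc]
          congr 1
          ring
      _ ≤ volA := measure_mono hBsub
  have hvolA_ub : volA ≤ ENNReal.ofReal (∏ i, 2 * r i) := by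
    calc volA ≤ (Measure.pi fun _ : Fin N => (volume : Measure ℝ))
            (Set.univ.pi fun i => Set.Icc (-α i - r i) (-α i + r i)) :=
          measure_mono hCsub
      _ = ∏ i, ENNReal.ofReal (2 * r i) := by
          rw [Measure.pi_pi]
          refine Finset.prod_congr rfl fun i _ => ?_
          rw [Real.volume_Icc]
          congr 1
          ring
      _ = ENNReal.ofReal (∏ i, 2 * r i) :=
          (ENNReal.ofReal_prod_of_nonneg fun i _ => by positivity).symm
  have hvolA_ne_top : volA ≠ ⊤ :=
    ne_top_of_le_ne_top ENNReal.ofReal_ne_top hvolA_ub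
  set vA : ℝ := volA.toReal with hvAdef
  set Ps : ℝ := ∏ i, s i with hPsdef
  have hPs_pos : 0 < Ps := Finset.prod_pos fun i _ => hs_pos i
  have hvA_ge : 2 ^ N * Ps ≤ vA := by
    have h1 : (ENNReal.ofReal (∏ i, 2 * s i)).toReal ≤ vA :=
      ENNReal.toReal_mono hvolA_ne_top hvolA_lb
    rw [ENNReal.toReal_ofReal (by positivity)] at h1
    calc 2 ^ N * Ps = ∏ i, 2 * s i := by
          rw [Finset.prod_mul_distrib, Finset.prod_const, Finset.card_univ,
            Fintype.card_fin, hPsdef]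
      _ ≤ vA := h1
  have hvA_pos : 0 < vA :=
    lt_of_lt_of_le (mul_pos (pow_pos two_pos N) hPs_pos) hvA_ge
  -- restate the goal using the abbreviations
  show (∫ z : Fin N → ℝ,
        A.indicator (fun z => (∏ i, s i *
            Real.exp ((z i + α i) ^ 2 / (2 * s i ^ 2) - z i ^ 2 / 2)) ^ 2) z
        ∂(Measure.pi fun i => gaussianReal (-α i) (Real.toNNReal (s i ^ 2))))
      / ((Measure.pi fun _ : Fin N => gaussianReal 0 1) A).toReal ^ 2
    ≤ Real.exp N * (τ / 2) ^ N * Real.exp S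
  set νm : Measure (Fin N → ℝ) :=
    Measure.pi fun i => gaussianReal (-α i) (Real.toNNReal (s i ^ 2)) with hνmdef
  set Pm : Measure (Fin N → ℝ) :=
    Measure.pi fun _ : Fin N => gaussianReal 0 1 with hPmdef
  have hv_ne : ∀ i, Real.toNNReal (s i ^ 2) ≠ 0 := fun i =>
    (Real.toNNReal_pos.mpr (pow_pos (hs_pos i) 2)).ne'
  have hv_coe : ∀ i, ((Real.toNNReal (s i ^ 2) : ℝ≥0) : ℝ) = s i ^ 2 := fun i =>
    Real.coe_toNNReal _ (sq_nonneg _)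
  haveI : ∀ i : Fin N, SigmaFinite
      ((volume : Measure ℝ).withDensity (gaussianPDF (-α i) (Real.toNNReal (s i ^ 2)))) := by
    intro i
    rw [← gaussianReal_of_var_ne_zero _ (hv_ne i)]
    infer_instance
  haveI : SigmaFinite
      ((volume : Measure ℝ).withDensity (gaussianPDF 0 1)) := by
    rw [← gaussianReal_of_var_ne_zero _ one_ne_zero]
    infer_instance
  have hνm_eq : νm = (Measure.pi fun _ : Fin N => (volume : Measure ℝ)).withDensity
      (fun x => ∏ i, gaussianPDF (-α i) (Real.toNNReal (s i ^ 2)) (x i)) := by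
    rw [hνmdef]
    rw [show (fun i => gaussianReal (-α i) (Real.toNNReal (s i ^ 2)))
        = fun i => (volume : Measure ℝ).withDensity
            (gaussianPDF (-α i) (Real.toNNReal (s i ^ 2))) from
      funext fun i => gaussianReal_of_var_ne_zero _ (hv_ne i)]
    exact IS_pi_withDensity _ _ fun i => measurable_gaussianPDF _ _
  have hPm_eq : Pm = (Measure.pi fun _ : Fin N => (volume : Measure ℝ)).withDensity
      (fun x => ∏ _i : Fin N, gaussianPDF 0 1 (x _i)) := by
    rw [hPmdef]
    rw [show (fun _i : Fin N => gaussianReal 0 1)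
        = fun _i : Fin N => (volume : Measure ℝ).withDensity (gaussianPDF 0 1) from
      funext fun i => gaussianReal_of_var_ne_zero _ one_ne_zero]
    exact IS_pi_withDensity _ _ fun i => measurable_gaussianPDF _ _
  -- pdf bounds
  set cν : ℝ := ∏ i, (τ * s i)⁻¹ with hcνdef
  have hcν_pos : 0 < cν :=
    Finset.prod_pos fun i _ => inv_pos.mpr (mul_pos hτ (hs_pos i))
  have hcν_eq : cν = (τ ^ N * Ps)⁻¹ := by
    rw [hcνdef, Finset.prod_inv_distrib, Finset.prod_mul_distrib,
      Finset.prod_const, Finset.card_univ, Fintype.card_fin, hPsdef]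
  have hpdf_ub : ∀ (i : Fin N) (x : ℝ),
      gaussianPDF (-α i) (Real.toNNReal (s i ^ 2)) x ≤ ENNReal.ofReal ((τ * s i)⁻¹) := by
    intro i x
    rw [gaussianPDF]
    apply ENNReal.ofReal_le_ofReal
    rw [gaussianPDFReal]
    have hsqrt : Real.sqrt (2 * π * ((Real.toNNReal (s i ^ 2) : ℝ≥0) : ℝ)) = τ * s i := by
      rw [hv_coe i, Real.sqrt_mul (by positivity), Real.sqrt_sq (hs_pos i).le, hτdef]
    rw [hsqrt]
    have hexp : Real.exp (-(x - -α i) ^ 2 / (2 * ((Real.toNNReal (s i ^ 2) : ℝ≥0) : ℝ))) ≤ 1 := by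
      rw [Real.exp_le_one_iff]
      apply div_nonpos_of_nonpos_of_nonneg (neg_nonpos.mpr (sq_nonneg _))
      rw [hv_coe i]
      positivity
    calc (τ * s i)⁻¹ * Real.exp (-(x - -α i) ^ 2 /
          (2 * ((Real.toNNReal (s i ^ 2) : ℝ≥0) : ℝ)))
        ≤ (τ * s i)⁻¹ * 1 := by
          apply mul_le_mul_of_nonneg_left hexp
          positivity
      _ = (τ * s i)⁻¹ := mul_one _
  have hνmA : νm A ≤ ENNReal.ofReal cν * volA := by
    rw [hνm_eq, withDensity_apply _ hA]
    calc ∫⁻ x in A, ∏ i, gaussianPDF (-α i) (Real.toNNReal (s i ^ 2)) (x i)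
          ∂(Measure.pi fun _ : Fin N => (volume : Measure ℝ))
        ≤ ∫⁻ _x in A, ENNReal.ofReal cν
          ∂(Measure.pi fun _ : Fin N => (volume : Measure ℝ)) := by
          apply setLIntegral_mono' hA
          intro x _
          rw [hcνdef, ENNReal.ofReal_prod_of_nonneg (fun i _ => by positivity)]
          exact Finset.prod_le_prod' fun i _ => hpdf_ub i (x i)
      _ = ENNReal.ofReal cν * volA := by
          rw [setLIntegral_const, hvolAdef]
  have hνmA_real : (νm A).toReal ≤ cν * vA := by
    have h := ENNReal.toReal_mono
      (ENNReal.mul_ne_top ENNReal.ofReal_ne_top hvolA_ne_top) hνmA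
    rwa [ENNReal.toReal_mul, ENNReal.toReal_ofReal hcν_pos.le] at h
  -- numerator bound
  set M : ℝ := Ps ^ 2 * Real.exp N with hMdef
  have hL2le : ∀ z ∈ A,
      (∏ i, s i * Real.exp ((z i + α i) ^ 2 / (2 * s i ^ 2) - z i ^ 2 / 2)) ^ 2 ≤ M := by
    intro z hz
    have hsum : ∑ i, ((z i + α i) ^ 2 / (2 * s i ^ 2) - z i ^ 2 / 2) ≤ (N : ℝ) / 2 := by
      calc ∑ i, ((z i + α i) ^ 2 / (2 * s i ^ 2) - z i ^ 2 / 2)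
          ≤ ∑ i, (z i + α i) ^ 2 / (2 * s i ^ 2) :=
            Finset.sum_le_sum fun i _ => sub_le_self _ (by positivity)
        _ = ((N : ℝ) / (2 * γ₀)) * ∑ i, lam i * (z i + α i) ^ 2 := by
            rw [Finset.mul_sum]
            refine Finset.sum_congr rfl fun i _ => ?_
            rw [hs_sq i]
            field_simp [hNR.ne', (hlam i).ne']
        _ ≤ ((N : ℝ) / (2 * γ₀)) * γ₀ := by
            apply mul_le_mul_of_nonneg_left hz
            positivity
        _ = (N : ℝ) / 2 := by field_simp
    have hL_nonneg : 0 ≤ ∏ i, s i * Real.exp ((z i + α i) ^ 2 / (2 * s i ^ 2) - z i ^ 2 / 2) :=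
      Finset.prod_nonneg fun i _ => by positivity
    have hLle : ∏ i, s i * Real.exp ((z i + α i) ^ 2 / (2 * s i ^ 2) - z i ^ 2 / 2)
        ≤ Ps * Real.exp ((N : ℝ) / 2) := by
      rw [Finset.prod_mul_distrib, ← Real.exp_sum, ← hPsdef]
      exact mul_le_mul_of_nonneg_left (Real.exp_le_exp.mpr hsum) hPs_pos.le
    calc (∏ i, s i * Real.exp ((z i + α i) ^ 2 / (2 * s i ^ 2) - z i ^ 2 / 2)) ^ 2
        ≤ (Ps * Real.exp (N / 2)) ^ 2 := pow_le_pow_left₀ hL_nonneg hLle 2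
      _ = M := by
          rw [hMdef, mul_pow, sq (Real.exp ((N : ℝ) / 2)), ← Real.exp_add]
          congr 2
          ring
  have hNum : (∫ z : Fin N → ℝ,
      A.indicator (fun z => (∏ i, s i *
        Real.exp ((z i + α i) ^ 2 / (2 * s i ^ 2) - z i ^ 2 / 2)) ^ 2) z ∂νm)
      ≤ M * (cν * vA) := by
    have hstep : (∫ z : Fin N → ℝ,
        A.indicator (fun z => (∏ i, s i *
          Real.exp ((z i + α i) ^ 2 / (2 * s i ^ 2) - z i ^ 2 / 2)) ^ 2) z ∂νm)
        ≤ ∫ z : Fin N → ℝ, A.indicator (fun _ => M) z ∂νm := by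
      apply integral_mono_of_nonneg
      · exact ae_of_all _ fun z => Set.indicator_nonneg (fun z _ => sq_nonneg _) z
      · exact (integrable_const M).indicator hA
      · refine ae_of_all _ fun z => ?_
        by_cases hz : z ∈ A
        · simpa [Set.indicator_of_mem hz] using hL2le z hz
        · simp [Set.indicator_of_notMem hz]
    rw [integral_indicator_const M hA] at hstep
    calc (∫ z : Fin N → ℝ,
        A.indicator (fun z => (∏ i, s i *
          Real.exp ((z i + α i) ^ 2 / (2 * s i ^ 2) - z i ^ 2 / 2)) ^ 2) z ∂νm)
        ≤ (νm A).toReal • M := hstep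
      _ = M * (νm A).toReal := by rw [smul_eq_mul]; ring
      _ ≤ M * (cν * vA) := by
          apply mul_le_mul_of_nonneg_left hνmA_real
          rw [hMdef]; positivity
  -- denominator bound
  set dν : ℝ := ∏ i, τ⁻¹ * Real.exp (-w i / 2) with hdνdef
  have hdν_pos : 0 < dν :=
    Finset.prod_pos fun i _ => mul_pos (inv_pos.mpr hτ) (Real.exp_pos _)
  have hdν_eq : dν = (τ ^ N)⁻¹ * Real.exp (-S / 2) := by
    rw [hdνdef, Finset.prod_mul_distrib, Finset.prod_const, Finset.card_univ,
      Fintype.card_fin, ← Real.exp_sum, inv_pow]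
    congr 1
    rw [hSdef]
    rw [← Finset.sum_div, ← Finset.sum_neg_distrib]
  have hstd : ∀ t : ℝ, gaussianPDFReal 0 1 t = τ⁻¹ * Real.exp (-t ^ 2 / 2) := by
    intro t
    rw [gaussianPDFReal, hτdef]
    norm_num
  have hpdf_lb : ∀ z ∈ A, ∀ i : Fin N,
      ENNReal.ofReal (τ⁻¹ * Real.exp (-w i / 2)) ≤ gaussianPDF 0 1 (z i) := by
    intro z hz i
    rw [gaussianPDF]
    apply ENNReal.ofReal_le_ofReal
    rw [hstd (z i)]
    apply mul_le_mul_of_nonneg_left _ (inv_pos.mpr hτ).le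
    apply Real.exp_le_exp.mpr
    have := hz_sq z hz i
    linarith
  have hPmA : ENNReal.ofReal dν * volA ≤ Pm A := by
    rw [hPm_eq, withDensity_apply _ hA]
    calc ENNReal.ofReal dν * volA
        = ∫⁻ _x in A, ENNReal.ofReal dν
          ∂(Measure.pi fun _ : Fin N => (volume : Measure ℝ)) := by
          rw [setLIntegral_const, hvolAdef]
      _ ≤ ∫⁻ x in A, ∏ _i : Fin N, gaussianPDF 0 1 (x _i)
          ∂(Measure.pi fun _ : Fin N => (volume : Measure ℝ)) := by
          apply setLIntegral_mono' hA
          intro x hx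
          rw [hdνdef, ENNReal.ofReal_prod_of_nonneg (fun i _ => by positivity)]
          exact Finset.prod_le_prod' fun i _ => hpdf_lb x hx i
  have hden : dν * vA ≤ (Pm A).toReal := by
    have h := ENNReal.toReal_mono (measure_ne_top Pm A) hPmA
    rwa [ENNReal.toReal_mul, ENNReal.toReal_ofReal hdν_pos.le] at h
  have hP_pos : 0 < (Pm A).toReal := lt_of_lt_of_le (mul_pos hdν_pos hvA_pos) hden
  -- final algebra
  set X : ℝ := Real.exp N * (τ / 2) ^ N * Real.exp S with hXdef
  have hX_pos : 0 < X := by rw [hXdef]; positivity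
  rw [div_le_iff₀ (pow_pos hP_pos 2)]
  have hE2 : Real.exp (-S / 2) ^ 2 = (Real.exp S)⁻¹ := by
    rw [sq, ← Real.exp_add, show -S / 2 + -S / 2 = -S by ring, Real.exp_neg]
  have hcore : M * cν = X * dν ^ 2 * (2 ^ N * Ps) := by
    rw [hMdef, hcν_eq, hdν_eq, hXdef, mul_pow, hE2]
    field_simp
    rw [← mul_pow]
    norm_num
  have h1 : M * cν ≤ X * dν ^ 2 * vA := by
    rw [hcore]
    apply mul_le_mul_of_nonneg_left hvA_ge
    positivity
  calc (∫ z : Fin N → ℝ,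
      A.indicator (fun z => (∏ i, s i *
        Real.exp ((z i + α i) ^ 2 / (2 * s i ^ 2) - z i ^ 2 / 2)) ^ 2) z ∂νm)
      ≤ M * (cν * vA) := hNum
    _ = (M * cν) * vA := by ring
    _ ≤ (X * dν ^ 2 * vA) * vA := mul_le_mul_of_nonneg_right h1 hvA_pos.le
    _ = X * (dν * vA) ^ 2 := by ring
    _ ≤ X * (Pm A).toReal ^ 2 := by
        apply mul_le_mul_of_nonneg_left _ hX_pos.le
        exact pow_le_pow_left₀ (by positivity) hden 2



/-- **Proposition 2.** Bounded relative error of the importance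
sampling estimator (noncentral real case): with `σᵢ = √(γ₀/(N λᵢ))` and biased
measure `ν_{γ₀} = ⊗ᵢ N(−αᵢ, σᵢ²)`,
`limsup_{γ₀→0⁺} (∫ 1{∑ λᵢ(zᵢ+αᵢ)² ≤ γ₀} L(z)² dν_{γ₀}) / P(γ₀)²
   ≤ (π/2)^N e^N exp(∑ᵢ αᵢ²)`, which is finite. -/
theorem bounded_relative_error_real_noncentral
    (N : ℕ) (hN : 0 < N) (lam α : Fin N → ℝ) (hlam : ∀ i, 0 < lam i)
    (σ : ℝ → Fin N → ℝ)
    (hσ : ∀ γ₀ i, σ γ₀ i = Real.sqrt (γ₀ / (N * lam i)))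
    (ν : ℝ → Measure (Fin N → ℝ))
    (hν : ∀ γ₀, ν γ₀ =
      Measure.pi fun i => gaussianReal (-α i) (Real.toNNReal (σ γ₀ i ^ 2)))
    (L : ℝ → (Fin N → ℝ) → ℝ)
    (hL : ∀ γ₀, L γ₀ = fun z => ∏ i, σ γ₀ i *
      Real.exp ((z i + α i) ^ 2 / (2 * σ γ₀ i ^ 2) - z i ^ 2 / 2))
    (P : ℝ → ℝ)
    (hP : ∀ γ₀, P γ₀ = ((Measure.pi fun _ : Fin N => gaussianReal 0 1)
      {z : Fin N → ℝ | ∑ i, lam i * (z i + α i) ^ 2 ≤ γ₀}).toReal) :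
    Filter.limsup
      (fun γ₀ : ℝ =>
        (∫ z : Fin N → ℝ,
            Set.indicator {z : Fin N → ℝ | ∑ i, lam i * (z i + α i) ^ 2 ≤ γ₀}
              (fun z => L γ₀ z ^ 2) z ∂(ν γ₀)) / P γ₀ ^ 2)
      (nhdsWithin 0 (Set.Ioi 0))
      ≤ (π / 2) ^ N * Real.exp N * Real.exp (∑ i, α i ^ 2) := by
  have hτπ : Real.sqrt (2 * π) < π := by
    have h2π : 2 * π < π ^ 2 := by nlinarith [Real.pi_gt_three]
    calc Real.sqrt (2 * π) < Real.sqrt (π ^ 2) :=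
          Real.sqrt_lt_sqrt (by positivity) h2π
      _ = π := Real.sqrt_sq Real.pi_pos.le
  apply Filter.limsup_le_of_le
  · apply isCoboundedUnder_le_of_le (nhdsWithin 0 (Set.Ioi 0)) (x := 0)
    intro γ₀
    apply div_nonneg _ (sq_nonneg _)
    apply integral_nonneg
    intro z
    exact Set.indicator_nonneg (fun z _ => sq_nonneg _) z
  · -- eventual bound
    have hc : Continuous fun γ₀ : ℝ => Real.exp N * (Real.sqrt (2 * π) / 2) ^ N *
        Real.exp (∑ i, (|α i| + Real.sqrt (γ₀ / lam i)) ^ 2) := by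
      apply Continuous.mul continuous_const
      apply Real.continuous_exp.comp
      apply continuous_finset_sum
      intro i _
      exact (continuous_const.add
        (Real.continuous_sqrt.comp (continuous_id.div_const _))).pow 2
    have hg : Filter.Tendsto (fun γ₀ : ℝ => Real.exp N * (Real.sqrt (2 * π) / 2) ^ N *
        Real.exp (∑ i, (|α i| + Real.sqrt (γ₀ / lam i)) ^ 2)) (nhdsWithin 0 (Set.Ioi 0))
        (nhds (Real.exp N * (Real.sqrt (2 * π) / 2) ^ N * Real.exp (∑ i, α i ^ 2))) := by
      apply Filter.Tendsto.mono_left _ nhdsWithin_le_nhds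
      have h0 := hc.tendsto 0
      simpa using h0
    have hlt : Real.exp N * (Real.sqrt (2 * π) / 2) ^ N * Real.exp (∑ i, α i ^ 2)
        < (π / 2) ^ N * Real.exp N * Real.exp (∑ i, α i ^ 2) := by
      have hpow : (Real.sqrt (2 * π) / 2) ^ N < (π / 2) ^ N := by
        apply pow_lt_pow_left₀ _ (by positivity) hN.ne'
        linarith
      have h2 : Real.exp N * (Real.sqrt (2 * π) / 2) ^ N
          < Real.exp N * (π / 2) ^ N := by
        exact mul_lt_mul_of_pos_left hpow (Real.exp_pos _)
      calc Real.exp N * (Real.sqrt (2 * π) / 2) ^ N * Real.exp (∑ i, α i ^ 2)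
          < Real.exp N * (π / 2) ^ N * Real.exp (∑ i, α i ^ 2) :=
            mul_lt_mul_of_pos_right h2 (Real.exp_pos _)
        _ = (π / 2) ^ N * Real.exp N * Real.exp (∑ i, α i ^ 2) := by ring
    have hev := hg.eventually_lt_const hlt
    filter_upwards [hev, self_mem_nhdsWithin] with γ₀ h1 h2
    have hb := IS_ratio_bound N hN lam α hlam γ₀ h2
    simp only [hν, hL, hP, hσ]
    exact le_trans (by exact hb) h1.le
end

section
/- (Bounded relative error of the importance sampling estimator, central real case.) Let N be a positive integer and λ_1, …, λ_N positive reals. For γ_0 > 0 set σ_i = √(γ_0/(N λ_i)), let ν_{γ_0} be the product over i of the Gaussian measures on ℝ with mean 0 and variance σ_i², let L(z) = Π_{i=1}^N σ_i exp( z_i²/(2σ_i²) − z_i²/2 ), and let P(γ_0) = P( Σ_{i=1}^N λ_i Z_i² ≤ γ_0 ) for i.i.d. standard Gaussians Z_1, …, Z_N. Then limsup_{γ_0 → 0⁺} [ ∫_{ℝᴺ} 1{ Σ_i λ_i z_i² ≤ γ_0 } L(z)² dν_{γ_0}(z) ] / P(γ_0)² ≤ (π/2)^N · e^{N}; in particular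 this limsup is finite. -/
open MeasureTheory ProbabilityTheory Filter Real

lemma gauss_icc_lb {s : ℝ} (hs : 0 < s) :
    2 * s * (Real.sqrt (2 * π))⁻¹ * Real.exp (-s ^ 2 / 2)
      ≤ ((gaussianReal 0 1) (Set.Icc (-s) s)).toReal := by
  have h2π : (0:ℝ) < 2 * π := by positivity
  rw [gaussianReal_apply_eq_integral 0 one_ne_zero]
  have hpdf : ∀ x : ℝ, gaussianPDFReal 0 1 x
      = (Real.sqrt (2 * π))⁻¹ * Real.exp (-x ^ 2 / 2) := by
    intro x
    simp [gaussianPDFReal]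
  have hmono : (∫ _x in Set.Icc (-s) s, ((Real.sqrt (2*π))⁻¹ * Real.exp (-s^2/2)))
      ≤ ∫ x in Set.Icc (-s) s, gaussianPDFReal 0 1 x := by
    refine setIntegral_mono_on (integrableOn_const ?_)
      ((integrable_gaussianPDFReal 0 1).integrableOn) measurableSet_Icc ?_
    · rw [Real.volume_Icc]; exact ENNReal.ofReal_ne_top
    · intro x hx
      rw [hpdf x]
      have hx2 : x^2 ≤ s^2 := sq_le_sq' hx.1 hx.2
      exact mul_le_mul_of_nonneg_left (Real.exp_le_exp.2 (by linarith)) (by positivity)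
  have hconst : (∫ _x in Set.Icc (-s) s, ((Real.sqrt (2*π))⁻¹ * Real.exp (-s^2/2)))
      = 2 * s * ((Real.sqrt (2*π))⁻¹ * Real.exp (-s^2/2)) := by
    rw [setIntegral_const, measureReal_def, Real.volume_Icc, smul_eq_mul,
      ENNReal.toReal_ofReal (by linarith)]
    ring
  have hnn : 0 ≤ ∫ x in Set.Icc (-s) s, gaussianPDFReal 0 1 x :=
    setIntegral_nonneg measurableSet_Icc fun x _ => gaussianPDFReal_nonneg 0 1 x
  rw [ENNReal.toReal_ofReal hnn]
  calc 2 * s * (Real.sqrt (2*π))⁻¹ * Real.exp (-s^2/2)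
      = ∫ _x in Set.Icc (-s) s, ((Real.sqrt (2*π))⁻¹ * Real.exp (-s^2/2)) := by
        rw [hconst]; ring
    _ ≤ _ := hmono

/-- Bounded relative error of the importance sampling estimator
(central real case): with `σᵢ = √(γ₀/(N λᵢ))` and biased measure
`ν_{γ₀} = ⊗ᵢ N(0, σᵢ²)`,
`limsup_{γ₀→0⁺} (∫ 1{∑ λᵢ zᵢ² ≤ γ₀} L(z)² dν_{γ₀}) / P(γ₀)² ≤ (π/2)^N e^N`. -/
theorem bounded_relative_error_real_central
    (N : ℕ) (hN : 0 < N) (lam : Fin N → ℝ) (hlam : ∀ i, 0 < lam i)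
    (σ : ℝ → Fin N → ℝ)
    (hσ : ∀ γ₀ i, σ γ₀ i = Real.sqrt (γ₀ / (N * lam i)))
    (ν : ℝ → Measure (Fin N → ℝ))
    (hν : ∀ γ₀, ν γ₀ =
      Measure.pi fun i => gaussianReal 0 (Real.toNNReal (σ γ₀ i ^ 2)))
    (L : ℝ → (Fin N → ℝ) → ℝ)
    (hL : ∀ γ₀, L γ₀ = fun z => ∏ i, σ γ₀ i *
      Real.exp (z i ^ 2 / (2 * σ γ₀ i ^ 2) - z i ^ 2 / 2))
    (P : ℝ → ℝ)
    (hP : ∀ γ₀, P γ₀ = ((Measure.pi fun _ : Fin N => gaussianReal 0 1)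
      {z : Fin N → ℝ | ∑ i, lam i * z i ^ 2 ≤ γ₀}).toReal) :
    Filter.limsup
      (fun γ₀ : ℝ =>
        (∫ z : Fin N → ℝ,
            Set.indicator {z : Fin N → ℝ | ∑ i, lam i * z i ^ 2 ≤ γ₀}
              (fun z => L γ₀ z ^ 2) z ∂(ν γ₀)) / P γ₀ ^ 2)
      (nhdsWithin 0 (Set.Ioi 0))
      ≤ (π / 2) ^ N * Real.exp N := by
  have hπ := Real.pi_pos
  have hNR : (0:ℝ) < N := by exact_mod_cast hN
  set c : ℝ := ∑ i : Fin N, 1/((N:ℝ) * lam i) with hc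
  have key : ∀ γ₀ ∈ Set.Ioi (0:ℝ),
      (∫ z : Fin N → ℝ,
          Set.indicator {z : Fin N → ℝ | ∑ i, lam i * z i ^ 2 ≤ γ₀}
            (fun z => L γ₀ z ^ 2) z ∂(ν γ₀)) / P γ₀ ^ 2
        ≤ (π/2)^N * Real.exp ((N:ℝ) + γ₀ * c) := by
    intro γ₀ hγ
    have hγ0 : 0 < γ₀ := hγ
    haveI : IsProbabilityMeasure (ν γ₀) := by rw [hν γ₀]; infer_instance
    set s : Fin N → ℝ := σ γ₀ with hsdef
    have hspos : ∀ i, 0 < s i := by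
      intro i; rw [hsdef, hσ]; exact Real.sqrt_pos.2 (div_pos hγ0 (mul_pos hNR (hlam i)))
    have hs2 : ∀ i, s i ^ 2 = γ₀ / (N * lam i) := by
      intro i; rw [hsdef, hσ, Real.sq_sqrt (div_pos hγ0 (mul_pos hNR (hlam i))).le]
    set A := {z : Fin N → ℝ | ∑ i, lam i * z i ^ 2 ≤ γ₀} with hA
    set C : ℝ := (∏ i, s i ^ 2) * Real.exp N with hC
    have hCnn : 0 ≤ C :=
      mul_nonneg (Finset.prod_nonneg fun i _ => sq_nonneg _) (Real.exp_nonneg _)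
    -- pointwise bound on L² on A
    have hLb : ∀ z ∈ A, L γ₀ z ^ 2 ≤ C := by
      intro z hz
      have hLz : L γ₀ z
          = (∏ i, s i) * Real.exp (∑ i, (z i ^2/(2 * s i ^2) - z i ^2/2)) := by
        simp only [hL γ₀, ← hsdef, Real.exp_sum, ← Finset.prod_mul_distrib]
      have hsum : ∑ i, (z i ^2/(2 * s i ^2) - z i ^2/2) ≤ (N:ℝ)/2 := by
        have h1 : ∀ i, z i ^2/(2 * s i ^2) - z i ^2/2
            ≤ (N/γ₀) * (lam i * z i ^2) / 2 := by
          intro i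
          have heq : z i ^2/(2 * s i ^2) = (N/γ₀) * (lam i * z i ^2)/2 := by
            rw [hs2 i]
            field_simp
          rw [heq]
          nlinarith [sq_nonneg (z i)]
        have hzA : ∑ i, lam i * z i ^ 2 ≤ γ₀ := hz
        calc ∑ i, (z i ^2/(2 * s i ^2) - z i ^2/2)
            ≤ ∑ i, (N/γ₀) * (lam i * z i ^2) / 2 :=
              Finset.sum_le_sum fun i _ => h1 i
          _ = (N/γ₀) * (∑ i, lam i * z i ^2) / 2 := by
              rw [← Finset.sum_div, ← Finset.mul_sum]
          _ ≤ (N/γ₀) * γ₀ / 2 := by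
              have hh : (0:ℝ) ≤ N/γ₀ := by positivity
              have := mul_le_mul_of_nonneg_left hzA hh
              linarith
          _ = (N:ℝ)/2 := by field_simp
      have hprodnn : (0:ℝ) ≤ ∏ i, s i := Finset.prod_nonneg fun i _ => (hspos i).le
      have hLle : L γ₀ z ≤ (∏ i, s i) * Real.exp ((N:ℝ)/2) := by
        rw [hLz]
        exact mul_le_mul_of_nonneg_left (Real.exp_le_exp.2 hsum) hprodnn
      have hLnn : 0 ≤ L γ₀ z := by
        simp only [hL γ₀, ← hsdef]
        exact Finset.prod_nonneg fun i _ =>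
          mul_nonneg (hspos i).le (Real.exp_nonneg _)
      calc L γ₀ z ^ 2 ≤ ((∏ i, s i) * Real.exp ((N:ℝ)/2))^2 :=
            pow_le_pow_left₀ hLnn hLle 2
        _ = C := by
            have hee : Real.exp ((N:ℝ)/2) ^ 2 = Real.exp (N:ℝ) := by
              rw [← Real.exp_nat_mul]; congr 1; push_cast; ring
            rw [hC, mul_pow, ← Finset.prod_pow, hee]
    have hint : (∫ z : Fin N → ℝ,
        Set.indicator A (fun z => L γ₀ z ^ 2) z ∂(ν γ₀)) ≤ C := by
      have hle : ∀ z, Set.indicator A (fun z => L γ₀ z ^ 2) z ≤ C := by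
        intro z
        by_cases hz : z ∈ A
        · rw [Set.indicator_of_mem hz]; exact hLb z hz
        · rw [Set.indicator_of_notMem hz]; exact hCnn
      have hnn : ∀ z, 0 ≤ Set.indicator A (fun z => L γ₀ z ^ 2) z :=
        fun z => Set.indicator_nonneg (fun y _ => sq_nonneg _) z
      calc (∫ z : Fin N → ℝ, Set.indicator A (fun z => L γ₀ z ^ 2) z ∂(ν γ₀))
          ≤ ∫ _z : Fin N → ℝ, C ∂(ν γ₀) :=
            integral_mono_of_nonneg (ae_of_all _ hnn) (integrable_const C)
              (ae_of_all _ hle)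
        _ = C := by simp
    -- lower bound on P
    set p : Fin N → ℝ :=
      fun i => 2 * s i * (Real.sqrt (2 * π))⁻¹ * Real.exp (-s i ^ 2 / 2) with hpdef
    have hppos : ∀ i, 0 < p i := by
      intro i
      have := hspos i
      rw [hpdef]
      positivity
    have hsub : (Set.univ.pi fun i => Set.Icc (-(s i)) (s i)) ⊆ A := by
      intro z hz
      simp only [Set.mem_pi, Set.mem_univ, forall_true_left] at hz
      have hzA : ∑ i, lam i * z i ^2 ≤ ∑ _i : Fin N, (γ₀ / (N:ℝ)) := by
        refine Finset.sum_le_sum fun i _ => ?_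
        have h1 : z i ^2 ≤ s i ^2 := sq_le_sq' (hz i).1 (hz i).2
        have h2 : lam i * z i ^2 ≤ lam i * s i ^2 :=
          mul_le_mul_of_nonneg_left h1 (hlam i).le
        have h3 : lam i * s i ^2 = γ₀ / N := by
          rw [hs2 i]
          field_simp [hNR.ne', (hlam i).ne']
        linarith
      have hsumc : ∑ _i : Fin N, (γ₀/(N:ℝ)) = γ₀ := by
        rw [Finset.sum_const, Finset.card_univ, Fintype.card_fin, nsmul_eq_mul]
        field_simp
      exact Set.mem_setOf.2 (by rw [← hsumc]; exact hzA)
    have hPlb : ∏ i, p i ≤ P γ₀ := by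
      rw [hP]
      have h1 : ((Measure.pi fun _ : Fin N => gaussianReal 0 1)
            (Set.univ.pi fun i => Set.Icc (-(s i)) (s i))).toReal
          ≤ ((Measure.pi fun _ : Fin N => gaussianReal 0 1) A).toReal :=
        ENNReal.toReal_mono (measure_ne_top _ _) (measure_mono hsub)
      refine le_trans ?_ h1
      rw [Measure.pi_pi, ENNReal.toReal_prod]
      refine Finset.prod_le_prod (fun i _ => (hppos i).le) fun i _ => ?_
      exact gauss_icc_lb (hspos i)
    have hPpos : 0 < ∏ i, p i := Finset.prod_pos fun i _ => hppos i
    have hdiv : (∫ z : Fin N → ℝ,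
          Set.indicator A (fun z => L γ₀ z ^ 2) z ∂(ν γ₀)) / P γ₀ ^ 2
        ≤ C / (∏ i, p i)^2 :=
      div_le_div₀ hCnn hint (by positivity) (pow_le_pow_left₀ hPpos.le hPlb 2)
    have hpi2 : ∀ i, p i ^2 = 2/π * s i ^2 * Real.exp (-s i ^2) := by
      intro i
      have he : Real.exp (-s i ^2/2) ^ 2 = Real.exp (-s i ^2) := by
        rw [sq, ← Real.exp_add]; congr 1; ring
      have ha : ((Real.sqrt (2*π))⁻¹ : ℝ)^2 = (2*π)⁻¹ := by
        rw [inv_pow, Real.sq_sqrt (by positivity)]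
      calc p i ^2
          = (2 * s i)^2 * ((Real.sqrt (2*π))⁻¹)^2 * (Real.exp (-s i ^2/2))^2 := by
            rw [hpdef]; ring
        _ = 2/π * s i ^2 * Real.exp (-s i ^2) := by
            rw [he, ha]
            field_simp
    have hsum2 : ∑ i, s i ^2 = γ₀ * c := by
      rw [hc, Finset.mul_sum]
      refine Finset.sum_congr rfl fun i _ => ?_
      rw [hs2 i, mul_one_div]
    have hprod2 : (∏ i, p i)^2
        = (2/π)^N * ((∏ i, s i ^2) * Real.exp (-(γ₀ * c))) := by
      rw [← Finset.prod_pow]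
      calc ∏ i, p i ^2
          = ∏ i, (2/π * s i ^2 * Real.exp (-s i ^2)) :=
            Finset.prod_congr rfl fun i _ => hpi2 i
        _ = (∏ _i : Fin N, ((2:ℝ)/π)) * (∏ i, s i ^2)
              * ∏ i, Real.exp (-s i ^2) := by
            rw [← Finset.prod_mul_distrib, ← Finset.prod_mul_distrib]
        _ = (2/π)^N * ((∏ i, s i ^2) * Real.exp (-(γ₀*c))) := by
            rw [Finset.prod_const, Finset.card_univ, Fintype.card_fin,
              ← Real.exp_sum]
            rw [show (∑ i, -s i ^2) = -(γ₀ * c) by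
              rw [Finset.sum_neg_distrib, hsum2]]
            ring
    have hfinal : C / (∏ i, p i)^2 = (π/2)^N * Real.exp ((N:ℝ) + γ₀ * c) := by
      rw [eq_comm, eq_div_iff (pow_ne_zero 2 hPpos.ne'), hprod2, hC]
      have h1 : ((π:ℝ)/2)^N * (2/π)^N = 1 := by
        rw [← mul_pow, show (π/2) * (2/π) = 1 by field_simp, one_pow]
      have h2 : Real.exp ((N:ℝ) + γ₀*c) * Real.exp (-(γ₀*c)) = Real.exp N := by
        rw [← Real.exp_add]; congr 1; ring
      calc (π/2)^N * Real.exp ((N:ℝ) + γ₀*c)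
            * ((2/π)^N * ((∏ i, s i ^2) * Real.exp (-(γ₀*c))))
          = ((π/2)^N * (2/π)^N)
            * (Real.exp ((N:ℝ)+γ₀*c) * Real.exp (-(γ₀*c))) * (∏ i, s i ^2) := by
            ring
        _ = (∏ i, s i ^2) * Real.exp (N:ℝ) := by rw [h1, h2]; ring
    rw [← hfinal]
    exact hdiv
  have hgT : Tendsto (fun γ₀ : ℝ => (π/2)^N * Real.exp ((N:ℝ) + γ₀ * c))
      (nhdsWithin 0 (Set.Ioi 0)) (nhds ((π/2)^N * Real.exp N)) := by
    have h1 : ContinuousAt (fun γ₀ : ℝ => (π/2)^N * Real.exp ((N:ℝ) + γ₀ * c)) 0 := by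
      fun_prop
    have h2 := h1.tendsto.mono_left (nhdsWithin_le_nhds (s := Set.Ioi (0:ℝ)))
    simpa using h2
  refine le_trans (limsup_le_limsup ?_ ?_ hgT.isBoundedUnder_le)
    (le_of_eq hgT.limsup_eq)
  · filter_upwards [self_mem_nhdsWithin] with γ₀ hγ using key γ₀ hγ
  · refine isCoboundedUnder_le_of_le _ (x := 0) fun γ₀ => ?_
    exact div_nonneg
      (integral_nonneg fun z => Set.indicator_nonneg (fun y _ => sq_nonneg _) z)
      (sq_nonneg _)
end

section
/- (Second moment bound for the importance sampling estimator, complex central case.) Let N be a positive integer, λ_1, …, λ_N positive reals, and γ_0 > 0. Set σ_i² = γ_0/(N λ_i) and let ν be the product over i of the exponential measures on [0,∞) with rate 1/σ_i². Let L(w) = Π_{i=1}^N σ_i² e^{ (1/σ_i² − 1) w_i }. Then ∫ 1{ Σ_{i=1}^N λ_i w_i ≤ γ_0 } · L(w)² dν(w) ≤ (γ_0/N)^{2N} · ( Π_{i=1}^N λ_i^{−2} ) · e^{2N}. -/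
open MeasureTheory ProbabilityTheory

/-- Second moment bound for the importance sampling estimator
(complex central case): with `σᵢ² = γ₀/(N λᵢ)` and biased measure
`ν = ⊗ᵢ Exp(1/σᵢ²)`,
`∫ 1{∑ λᵢ wᵢ ≤ γ₀} L(w)² dν ≤ (γ₀/N)^{2N} (∏ᵢ λᵢ⁻²) e^{2N}`. -/
theorem importance_sampling_second_moment_bound_complex
    (N : ℕ) (hN : 0 < N) (lam σsq : Fin N → ℝ) (hlam : ∀ i, 0 < lam i)
    (γ₀ : ℝ) (hγ₀ : 0 < γ₀)
    (hσsq : ∀ i, σsq i = γ₀ / (N * lam i))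
    (ν : Measure (Fin N → ℝ))
    (hν : ν = Measure.pi fun i => expMeasure (1 / σsq i))
    (L : (Fin N → ℝ) → ℝ)
    (hL : L = fun w => ∏ i, σsq i * Real.exp ((1 / σsq i - 1) * w i)) :
    ∫ w : Fin N → ℝ,
        Set.indicator {w : Fin N → ℝ | ∑ i, lam i * w i ≤ γ₀}
          (fun w => L w ^ 2) w ∂ν
      ≤ (γ₀ / N) ^ (2 * N) * (∏ i, (lam i)⁻¹ ^ 2) * Real.exp (2 * N) := by
  have hNR : (0:ℝ) < N := by exact_mod_cast hN
  have hσpos : ∀ i, 0 < σsq i := by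
    intro i; rw [hσsq i]; exact div_pos hγ₀ (mul_pos hNR (hlam i))
  have hrate : ∀ i, 0 < 1 / σsq i := fun i => by
    rw [one_div]; exact inv_pos.2 (hσpos i)
  set C : ℝ := (γ₀ / N) ^ (2 * N) * (∏ i, (lam i)⁻¹ ^ 2) * Real.exp (2 * N) with hC
  have hCpos : 0 < C := by
    apply mul_pos (mul_pos (pow_pos (div_pos hγ₀ hNR) _) _) (Real.exp_pos _)
    exact Finset.prod_pos fun i _ => pow_pos (inv_pos.2 (hlam i)) 2
  -- probability measure instances
  have hprob : ∀ i, IsProbabilityMeasure (expMeasure (1 / σsq i)) :=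
    fun i => isProbabilityMeasure_expMeasure (hrate i)
  have hνprob : IsProbabilityMeasure ν := by
    rw [hν]; exact MeasureTheory.Measure.pi.instIsProbabilityMeasure _
  -- a.e. all coordinates are nonnegative
  have hIio : ∀ i, expMeasure (1 / σsq i) (Set.Iio 0) = 0 := by
    intro i
    rw [expMeasure, gammaMeasure, withDensity_apply _ measurableSet_Iio]
    exact lintegral_gammaPDF_of_nonpos le_rfl
  have hae : ∀ᵐ w ∂ν, ∀ i, 0 ≤ w i := by
    have hS : ν (Set.pi Set.univ fun _ : Fin N => Set.Ici (0:ℝ)) = 1 := by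
      rw [hν, Measure.pi_pi]
      have h1 : ∀ i : Fin N, expMeasure (1 / σsq i) (Set.Ici (0:ℝ)) = 1 := by
        intro i
        have := hprob i
        have h := measure_add_measure_compl (μ := expMeasure (1 / σsq i))
          (measurableSet_Ici (a := (0:ℝ)))
        rw [Set.compl_Ici, hIio i, add_zero, measure_univ] at h
        exact h
      rw [Finset.prod_congr rfl fun i _ => h1 i, Finset.prod_const_one]
    have hcompl : ν (Set.pi Set.univ fun _ : Fin N => Set.Ici (0:ℝ))ᶜ = 0 := by
      have := hνprob
      rw [measure_compl (MeasurableSet.univ_pi fun i => measurableSet_Ici) (by simp), hS, measure_univ]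
      simp
    refine (ae_iff.2 ?_)
    refine measure_mono_null (fun w hw => ?_) hcompl
    simp only [Set.mem_setOf_eq, not_forall, not_le] at hw
    obtain ⟨i, hi⟩ := hw
    intro hmem
    exact absurd (hmem i (Set.mem_univ i)) (not_le.2 hi)
  -- pointwise bound
  have hbound : ∀ w : Fin N → ℝ, (∀ i, 0 ≤ w i) →
      Set.indicator {w : Fin N → ℝ | ∑ i, lam i * w i ≤ γ₀} (fun w => L w ^ 2) w ≤ C := by
    intro w h0
    by_cases hw : w ∈ {w : Fin N → ℝ | ∑ i, lam i * w i ≤ γ₀}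
    · rw [Set.indicator_of_mem hw]
      have hLsq : L w ^ 2 =
          (∏ i, (σsq i) ^ 2) * Real.exp (∑ i, 2 * ((1 / σsq i - 1) * w i)) := by
        rw [hL]
        simp only
        rw [← Finset.prod_pow, Real.exp_sum, ← Finset.prod_mul_distrib]
        congr 1 with i
        rw [mul_pow, two_mul, Real.exp_add]; ring
      rw [hLsq]
      have hsum : ∑ i, 2 * ((1 / σsq i - 1) * w i) ≤ 2 * N := by
        have h1 : ∀ i : Fin N, 2 * ((1 / σsq i - 1) * w i) ≤ 2 * ((1 / σsq i) * w i) := by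
          intro i
          have := h0 i
          nlinarith [h0 i]
        calc ∑ i, 2 * ((1 / σsq i - 1) * w i) ≤ ∑ i, 2 * ((1 / σsq i) * w i) :=
              Finset.sum_le_sum fun i _ => h1 i
          _ = 2 * (N / γ₀) * ∑ i, lam i * w i := by
              have h2 : ∀ i : Fin N, 2 * ((1 / σsq i) * w i)
                  = (2 * ((N:ℝ) / γ₀)) * (lam i * w i) := by
                intro i
                rw [hσsq i, one_div_div]
                field_simp
              rw [Finset.sum_congr rfl fun i _ => h2 i, ← Finset.mul_sum]
          _ ≤ 2 * (N / γ₀) * γ₀ := by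
              apply mul_le_mul_of_nonneg_left hw (by positivity)
          _ = 2 * N := by field_simp
      have hprodσ : ∏ i, (σsq i) ^ 2 = (γ₀ / N) ^ (2 * N) * ∏ i, (lam i)⁻¹ ^ 2 := by
        have : ∀ i : Fin N, (σsq i) ^ 2 = (γ₀ / N) ^ 2 * (lam i)⁻¹ ^ 2 := by
          intro i
          rw [hσsq i]
          rw [div_mul_eq_div_div]
          rw [div_eq_mul_inv (γ₀ / ↑N)]
          ring
        rw [Finset.prod_congr rfl fun i _ => this i, Finset.prod_mul_distrib,
          Finset.prod_const, Finset.card_univ, Fintype.card_fin, ← pow_mul]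
      rw [hprodσ, hC, mul_assoc, mul_assoc]
      apply mul_le_mul_of_nonneg_left _ (by positivity)
      apply mul_le_mul_of_nonneg_left _
        (le_of_lt (Finset.prod_pos fun i _ => pow_pos (inv_pos.2 (hlam i)) 2))
      exact Real.exp_le_exp.2 hsum
    · rw [Set.indicator_of_notMem hw]; exact hCpos.le
  -- measurability
  have hLmeas : Measurable L := by
    rw [hL]
    exact Finset.measurable_prod _ fun i _ => by fun_prop
  have hsetmeas : MeasurableSet {w : Fin N → ℝ | ∑ i, lam i * w i ≤ γ₀} := by
    apply measurableSet_le _ measurable_const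
    exact Finset.measurable_sum _ fun i _ => by fun_prop
  have hfmeas : Measurable fun w =>
      Set.indicator {w : Fin N → ℝ | ∑ i, lam i * w i ≤ γ₀} (fun w => L w ^ 2) w :=
    Measurable.indicator (hLmeas.pow_const 2) hsetmeas
  have hnonneg : ∀ w, 0 ≤
      Set.indicator {w : Fin N → ℝ | ∑ i, lam i * w i ≤ γ₀} (fun w => L w ^ 2) w := by
    intro w
    apply Set.indicator_nonneg
    intro x _; positivity
  have haebound : ∀ᵐ w ∂ν,
      ‖Set.indicator {w : Fin N → ℝ | ∑ i, lam i * w i ≤ γ₀} (fun w => L w ^ 2) w‖ ≤ C := by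
    filter_upwards [hae] with w hw
    rw [Real.norm_eq_abs, abs_of_nonneg (hnonneg w)]
    exact hbound w hw
  have hint : Integrable (fun w =>
      Set.indicator {w : Fin N → ℝ | ∑ i, lam i * w i ≤ γ₀} (fun w => L w ^ 2) w) ν :=
    Integrable.mono' (integrable_const C) hfmeas.aestronglyMeasurable haebound
  calc ∫ w, Set.indicator {w : Fin N → ℝ | ∑ i, lam i * w i ≤ γ₀}
          (fun w => L w ^ 2) w ∂ν
      ≤ ∫ _, C ∂ν := by
        apply integral_mono_ae hint (integrable_const C)
        filter_upwards [hae] with w hw using hbound w hw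
    _ = C := by simp [measure_univ]
end

section
/- (Asymptotic lower bound on the left-tail probability, complex central case.) Let N be a positive integer and λ_1, …, λ_N positive reals, and let W_1, …, W_N be i.i.d. exponential random variables with rate 1. Then liminf_{γ_0 → 0⁺} P( Σ_{i=1}^N λ_i W_i ≤ γ_0 ) / γ_0^{N} ≥ 1 / ( N^N · Π_{i=1}^N λ_i ). -/
open MeasureTheory ProbabilityTheory Filter

lemma aux_expMeasure_Iic {x : ℝ} (hx : 0 ≤ x) :
    expMeasure 1 (Set.Iic x) = ENNReal.ofReal (1 - Real.exp (-x)) := by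
  have h : expMeasure 1 (Set.Iic x) = ∫⁻ y in Set.Iic x, exponentialPDF 1 y := by
    rw [expMeasure, gammaMeasure, withDensity_apply _ measurableSet_Iic]
    rfl
  rw [h, lintegral_exponentialPDF_eq_antiDeriv one_pos, if_pos hx, one_mul]

lemma aux_expMeasure_Iio_zero : expMeasure 1 (Set.Iio 0) = 0 := by
  have h : expMeasure 1 (Set.Iio 0) = ∫⁻ y in Set.Iio (0:ℝ), exponentialPDF 1 y := by
    rw [expMeasure, gammaMeasure, withDensity_apply _ measurableSet_Iio]
    rfl
  rw [h, lintegral_exponentialPDF_of_nonpos le_rfl]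

/-- Asymptotic lower bound on the left-tail probability (complex
central case): for i.i.d. rate-1 exponentials `W₁,…,W_N`,
`liminf_{γ₀→0⁺} P(∑ λᵢ Wᵢ ≤ γ₀)/γ₀^N ≥ 1/(N^N ∏ᵢ λᵢ)`. -/
theorem left_tail_liminf_lower_bound_exponential
    (N : ℕ) (hN : 0 < N) (lam : Fin N → ℝ) (hlam : ∀ i, 0 < lam i) :
    Filter.liminf
      (fun γ₀ : ℝ =>
        ((Measure.pi fun _ : Fin N => expMeasure 1)
            {w : Fin N → ℝ | ∑ i, lam i * w i ≤ γ₀}).toReal / γ₀ ^ N)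
      (nhdsWithin 0 (Set.Ioi 0))
      ≥ 1 / ((N : ℝ) ^ N * ∏ i, lam i) := by
  have hNpos : (0:ℝ) < N := Nat.cast_pos.mpr hN
  set μ : Measure (Fin N → ℝ) := Measure.pi fun _ : Fin N => expMeasure 1 with hμ
  have hprobE : IsProbabilityMeasure (expMeasure 1) := isProbabilityMeasure_expMeasure one_pos
  have hprob : IsProbabilityMeasure μ := by infer_instance
  set c : Fin N → ℝ := fun i => 1 / (N * lam i) with hc
  have hcpos : ∀ i, 0 < c i := fun i => by
    have := hlam i; simp only [hc]; positivity
  set f : ℝ → ℝ := fun γ₀ =>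
      (μ {w : Fin N → ℝ | ∑ i, lam i * w i ≤ γ₀}).toReal / γ₀ ^ N with hf
  set g : ℝ → ℝ := fun γ => ∏ i, ((1 - Real.exp (-(γ * c i))) / γ) with hg
  -- pointwise bound on Ioi 0
  have hle : ∀ γ ∈ Set.Ioi (0:ℝ), g γ ≤ f γ := by
    intro γ hγ
    rw [Set.mem_Ioi] at hγ
    have hsub : (Set.pi Set.univ fun i => Set.Iic (γ * c i))
        ⊆ {w : Fin N → ℝ | ∑ i, lam i * w i ≤ γ} := by
      intro w hw
      simp only [Set.mem_pi, Set.mem_univ, Set.mem_Iic, forall_true_left] at hw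
      have hbound : ∀ i, lam i * w i ≤ γ / N := by
        intro i
        have h1 : lam i * w i ≤ lam i * (γ * c i) :=
          mul_le_mul_of_nonneg_left (hw i) (hlam i).le
        have h2 : lam i * (γ * c i) = γ / N := by
          have hNe : (N:ℝ) ≠ 0 := ne_of_gt hNpos
          have hlne : lam i ≠ 0 := ne_of_gt (hlam i)
          simp only [hc]
          field_simp
        linarith
      have : ∑ i, lam i * w i ≤ ∑ _i : Fin N, γ / N :=
        Finset.sum_le_sum fun i _ => hbound i
      simp only [Finset.sum_const, Finset.card_univ, Fintype.card_fin, nsmul_eq_mul] at this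
      calc ∑ i, lam i * w i ≤ N * (γ / N) := this
        _ = γ := by field_simp
    have hmeas : μ (Set.pi Set.univ fun i => Set.Iic (γ * c i))
        = ∏ i, ENNReal.ofReal (1 - Real.exp (-(γ * c i))) := by
      rw [hμ, Measure.pi_pi]
      exact Finset.prod_congr rfl fun i _ =>
        aux_expMeasure_Iic (mul_nonneg hγ.le (hcpos i).le)
    have hmono : (∏ i, ENNReal.ofReal (1 - Real.exp (-(γ * c i)))).toReal
        ≤ (μ {w : Fin N → ℝ | ∑ i, lam i * w i ≤ γ}).toReal := by
      rw [← hmeas]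
      exact ENNReal.toReal_mono (measure_ne_top μ _) (measure_mono hsub)
    have hfac_nonneg : ∀ i : Fin N, (0:ℝ) ≤ 1 - Real.exp (-(γ * c i)) := by
      intro i
      have : Real.exp (-(γ * c i)) ≤ 1 := by
        rw [Real.exp_le_one_iff]
        have := hcpos i; nlinarith
      linarith
    have htoReal : (∏ i, ENNReal.ofReal (1 - Real.exp (-(γ * c i)))).toReal
        = ∏ i, (1 - Real.exp (-(γ * c i))) := by
      rw [ENNReal.toReal_prod]
      exact Finset.prod_congr rfl fun i _ => ENNReal.toReal_ofReal (hfac_nonneg i)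
    have hgeq : g γ = (∏ i, (1 - Real.exp (-(γ * c i)))) / γ ^ N := by
      simp only [hg]
      rw [Finset.prod_div_distrib, Finset.prod_const, Finset.card_univ, Fintype.card_fin]
    rw [hgeq, hf]
    apply div_le_div_of_nonneg_right _ (by positivity)
    · rw [← htoReal]; exact hmono
  -- upper bound for coboundedness
  have hi : ∀ i : Fin N, μ {w : Fin N → ℝ | w i < 0} = 0 := by
    intro i
    have hsub : {w : Fin N → ℝ | w i < 0}
        ⊆ Set.pi Set.univ (fun j => if j = i then Set.Iio 0 else Set.univ) := by
      intro w hw j _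
      by_cases h : j = i
      · subst h; simpa using hw
      · simp [h]
    refine measure_mono_null hsub ?_
    rw [hμ, Measure.pi_pi]
    apply Finset.prod_eq_zero (Finset.mem_univ i)
    simp [aux_expMeasure_Iio_zero]
  have hnull : μ {w : Fin N → ℝ | ∃ i, w i < 0} = 0 := by
    have heq : {w : Fin N → ℝ | ∃ i, w i < 0} = ⋃ i, {w : Fin N → ℝ | w i < 0} := by
      ext w; simp
    rw [heq]
    exact measure_iUnion_null hi
  have hupper : ∀ γ ∈ Set.Ioi (0:ℝ), f γ ≤ 1 / ∏ i, lam i := by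
    intro γ hγ
    rw [Set.mem_Ioi] at hγ
    have hsub2 : {w : Fin N → ℝ | ∑ i, lam i * w i ≤ γ}
        ⊆ {w : Fin N → ℝ | ∃ i, w i < 0}
          ∪ Set.pi Set.univ (fun i => Set.Iic (γ / lam i)) := by
      intro w hw
      by_cases hneg : ∃ i, w i < 0
      · exact Or.inl hneg
      · push_neg at hneg
        refine Or.inr fun j _ => ?_
        simp only [Set.mem_Iic]
        have hterm : lam j * w j ≤ ∑ i, lam i * w i :=
          Finset.single_le_sum (fun i _ => mul_nonneg (hlam i).le (hneg i))
            (Finset.mem_univ j)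
        have hwj : lam j * w j ≤ γ := le_trans hterm hw
        rw [le_div_iff₀ (hlam j)]
        linarith [hwj, mul_comm (lam j) (w j)]
    have hμle : μ {w : Fin N → ℝ | ∑ i, lam i * w i ≤ γ}
        ≤ ∏ i, ENNReal.ofReal (1 - Real.exp (-(γ / lam i))) := by
      calc μ {w : Fin N → ℝ | ∑ i, lam i * w i ≤ γ}
          ≤ μ {w : Fin N → ℝ | ∃ i, w i < 0}
            + μ (Set.pi Set.univ fun i => Set.Iic (γ / lam i)) :=
            (measure_mono hsub2).trans (measure_union_le _ _)
        _ = μ (Set.pi Set.univ fun i => Set.Iic (γ / lam i)) := by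
            rw [hnull, zero_add]
        _ = ∏ i, ENNReal.ofReal (1 - Real.exp (-(γ / lam i))) := by
            rw [hμ, Measure.pi_pi]
            exact Finset.prod_congr rfl fun i _ =>
              aux_expMeasure_Iic (by have := hlam i; positivity)
    have hone : ∀ i : Fin N, (0:ℝ) ≤ 1 - Real.exp (-(γ / lam i)) := by
      intro i
      have h0 : (0:ℝ) < γ / lam i := div_pos hγ (hlam i)
      have : Real.exp (-(γ / lam i)) ≤ 1 := by
        rw [Real.exp_le_one_iff]
        linarith
      linarith
    have hreal : (μ {w : Fin N → ℝ | ∑ i, lam i * w i ≤ γ}).toReal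
        ≤ ∏ i, (1 - Real.exp (-(γ / lam i))) := by
      have := ENNReal.toReal_mono (by
          exact ENNReal.prod_ne_top fun i _ => ENNReal.ofReal_ne_top) hμle
      rw [ENNReal.toReal_prod] at this
      refine this.trans_eq (Finset.prod_congr rfl fun i _ =>
        ENNReal.toReal_ofReal (hone i))
    have hprodle : ∏ i, (1 - Real.exp (-(γ / lam i))) ≤ ∏ i, γ / lam i := by
      refine Finset.prod_le_prod (fun i _ => hone i) fun i _ => ?_
      have h := Real.add_one_le_exp (-(γ / lam i))
      linarith
    have hprodeq : ∏ i : Fin N, γ / lam i = γ ^ N / ∏ i, lam i := by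
      rw [Finset.prod_div_distrib, Finset.prod_const, Finset.card_univ, Fintype.card_fin]
    have hprodlam : (0:ℝ) < ∏ i, lam i := Finset.prod_pos fun i _ => hlam i
    rw [hf]
    calc (μ {w : Fin N → ℝ | ∑ i, lam i * w i ≤ γ}).toReal / γ ^ N
        ≤ (γ ^ N / ∏ i, lam i) / γ ^ N := by
          apply div_le_div_of_nonneg_right _ (by positivity)
          exact hreal.trans (hprodle.trans_eq hprodeq)
      _ = 1 / ∏ i, lam i := by
          have hγN : (γ:ℝ) ^ N ≠ 0 := by positivity
          have hp : (∏ i, lam i) ≠ 0 := ne_of_gt hprodlam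
          field_simp
  -- limit of g
  set L : ℝ := ∏ i, c i with hL
  have hgt : Tendsto g (nhdsWithin 0 (Set.Ioi 0)) (nhds L) := by
    rw [hg, hL]
    apply tendsto_finset_prod
    intro i _
    -- each factor tends to c i
    have hderiv : HasDerivAt (fun γ : ℝ => 1 - Real.exp (-(γ * c i))) (c i) 0 := by
      have h1 : HasDerivAt (fun a : ℝ => -Real.exp (-(c i * a)))
          (c i * Real.exp (-(c i * 0))) 0 := hasDerivAt_neg_exp_mul_exp
      have h2 := h1.const_add (1:ℝ)
      simp only [mul_zero, neg_zero, Real.exp_zero, mul_one] at h2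
      exact h2.congr_of_eventuallyEq (Eventually.of_forall fun γ => by ring)
    have hslope := hasDerivAt_iff_tendsto_slope.mp hderiv
    have hsub : nhdsWithin (0:ℝ) (Set.Ioi 0) ≤ nhdsWithin 0 {(0:ℝ)}ᶜ :=
      nhdsWithin_mono 0 (fun x hx => ne_of_gt hx)
    have := hslope.mono_left hsub
    apply this.congr'
    filter_upwards [self_mem_nhdsWithin] with γ hγ
    rw [Set.mem_Ioi] at hγ
    simp [slope_def_field]
  have hLval : L = 1 / ((N : ℝ) ^ N * ∏ i, lam i) := by
    rw [hL, hc]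
    rw [Finset.prod_div_distrib, Finset.prod_const, Finset.card_univ, Fintype.card_fin,
      one_pow, Finset.prod_mul_distrib, Finset.prod_const, Finset.card_univ, Fintype.card_fin]
  -- conclude
  rw [ge_iff_le, ← hLval, ← hgt.liminf_eq]
  apply liminf_le_liminf
  · filter_upwards [self_mem_nhdsWithin] with γ hγ using hle γ hγ
  · exact hgt.isBoundedUnder_ge
  · exact isCoboundedUnder_ge_of_eventually_le _
      (by filter_upwards [self_mem_nhdsWithin] with γ hγ using hupper γ hγ)
end

section
/- (Bounded relative error of the importance sampling estimator, complex central case.) Let N be a positive integer and λ_1, …, λ_N positive reals. For γ_0 > 0 set σ_i² = γ_0/(N λ_i), let ν_{γ_0} be the product over i of the exponential measures on [0,∞) with rate 1/σ_i², let L(w) = Π_{i=1}^N σ_i² e^{ (1/σ_i² − 1) w_i }, and let P(γ_0) = P( Σ_{i=1}^N λ_i W_i ≤ γ_0 ) for W_1, …, W_N i.i.d. exponential with rate 1. Then limsup_{γ_0 → 0⁺} [ ∫ 1{ Σ_i λ_i w_i ≤ γ_0 } L(w)² dν_{γ_0}(w) ] / P(γ_0)² ≤ 2^{2N} · e^{2N};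 in particular this limsup is finite, so the importance sampling estimator has bounded relative error. -/
open MeasureTheory ProbabilityTheory Filter

lemma helper_expMeasure_Iio_zero (r : ℝ) : expMeasure r (Set.Iio 0) = 0 := by
  rw [expMeasure, gammaMeasure, withDensity_apply _ measurableSet_Iio]
  exact lintegral_exponentialPDF_of_nonpos le_rfl

lemma helper_expMeasure_Icc {r a : ℝ} (hr : 0 < r) (ha : 0 ≤ a) :
    expMeasure r (Set.Icc 0 a) = ENNReal.ofReal (1 - Real.exp (-(r * a))) := by
  have hdiff : Set.Iic a \ Set.Iio 0 = Set.Icc 0 a := by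
    ext x; simp [Set.mem_diff, not_lt, and_comm]
  have h1 : expMeasure r (Set.Icc 0 a) = expMeasure r (Set.Iic a) := by
    rw [← hdiff, measure_diff_null (helper_expMeasure_Iio_zero r)]
  rw [h1, expMeasure, gammaMeasure, withDensity_apply _ measurableSet_Iic]
  have h2 := lintegral_exponentialPDF_eq_antiDeriv hr a
  rw [if_pos ha] at h2
  exact h2

lemma helper_one_sub_exp {a : ℝ} (h0 : 0 ≤ a) (h1 : a ≤ 1) :
    a / 2 ≤ 1 - Real.exp (-a) := by
  have hprod : Real.exp (-a) * Real.exp a = 1 := by rw [← Real.exp_add]; simp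
  nlinarith [Real.add_one_le_exp a, Real.exp_pos (-a), sq_nonneg a]

/-- Bounded relative error of the importance sampling estimator
(complex central case): with `σᵢ² = γ₀/(N λᵢ)`, biased measure
`ν_{γ₀} = ⊗ᵢ Exp(1/σᵢ²)` and likelihood ratio `L(w) = ∏ᵢ σᵢ² e^{(1/σᵢ²−1)wᵢ}`,
`limsup_{γ₀→0⁺} (∫ 1{∑ λᵢ wᵢ ≤ γ₀} L(w)² dν_{γ₀}) / P(γ₀)² ≤ 2^{2N} e^{2N}`,
which is finite. -/
theorem bounded_relative_error_complex_central
    (N : ℕ) (hN : 0 < N) (lam : Fin N → ℝ) (hlam : ∀ i, 0 < lam i)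
    (σsq : ℝ → Fin N → ℝ)
    (hσsq : ∀ γ₀ i, σsq γ₀ i = γ₀ / (N * lam i))
    (ν : ℝ → Measure (Fin N → ℝ))
    (hν : ∀ γ₀, ν γ₀ = Measure.pi fun i => expMeasure (1 / σsq γ₀ i))
    (L : ℝ → (Fin N → ℝ) → ℝ)
    (hL : ∀ γ₀, L γ₀ = fun w => ∏ i, σsq γ₀ i *
      Real.exp ((1 / σsq γ₀ i - 1) * w i))
    (P : ℝ → ℝ)
    (hP : ∀ γ₀, P γ₀ = ((Measure.pi fun _ : Fin N => expMeasure 1)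
      {w : Fin N → ℝ | ∑ i, lam i * w i ≤ γ₀}).toReal) :
    Filter.limsup
      (fun γ₀ : ℝ =>
        (∫ w : Fin N → ℝ,
            Set.indicator {w : Fin N → ℝ | ∑ i, lam i * w i ≤ γ₀}
              (fun w => L γ₀ w ^ 2) w ∂(ν γ₀)) / P γ₀ ^ 2)
      (nhdsWithin 0 (Set.Ioi 0))
      ≤ 2 ^ (2 * N) * Real.exp (2 * N) := by
  haveI : NeZero N := ⟨hN.ne'⟩
  have hNpos : (0:ℝ) < N := Nat.cast_pos.mpr hN
  haveI hprob1 : IsProbabilityMeasure (expMeasure (1:ℝ)) :=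
    isProbabilityMeasure_expMeasure one_pos
  have hne : (Finset.univ : Finset (Fin N)).Nonempty := Finset.univ_nonempty
  set δ : ℝ := Finset.univ.inf' hne (fun i => (N : ℝ) * lam i) with hδ
  have hδpos : 0 < δ := by
    rw [hδ, Finset.lt_inf'_iff]
    intro i _
    exact mul_pos hNpos (hlam i)
  -- the key eventual pointwise bound
  have key : ∀ᶠ γ₀ in nhdsWithin (0:ℝ) (Set.Ioi 0),
      (∫ w : Fin N → ℝ,
          Set.indicator {w : Fin N → ℝ | ∑ i, lam i * w i ≤ γ₀}
            (fun w => L γ₀ w ^ 2) w ∂(ν γ₀)) / P γ₀ ^ 2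
        ≤ 2 ^ (2 * N) * Real.exp (2 * N) := by
    filter_upwards [Ioo_mem_nhdsGT hδpos] with γ hγ
    obtain ⟨hγ0, hγδ⟩ := hγ
    have hσ : ∀ i, σsq γ i = γ / (N * lam i) := hσsq γ
    have hσpos : ∀ i, 0 < σsq γ i := fun i => by
      rw [hσ i]; exact div_pos hγ0 (mul_pos hNpos (hlam i))
    have hσle1 : ∀ i, σsq γ i ≤ 1 := fun i => by
      rw [hσ i]
      apply le_of_lt
      rw [div_lt_one (mul_pos hNpos (hlam i))]
      exact lt_of_lt_of_le hγδ (Finset.inf'_le _ (Finset.mem_univ i))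
    set A : ℝ := ∏ i, σsq γ i with hA
    have hApos : 0 < A := Finset.prod_pos fun i _ => hσpos i
    set S : Set (Fin N → ℝ) := {w : Fin N → ℝ | ∑ i, lam i * w i ≤ γ} with hS
    haveI hprobν : ∀ i : Fin N, IsProbabilityMeasure (expMeasure (1 / σsq γ i)) :=
      fun i => isProbabilityMeasure_expMeasure (one_div_pos.mpr (hσpos i))
    haveI : IsProbabilityMeasure (ν γ) := by
      rw [hν]; infer_instance
    -- a.e. nonnegativity of coordinates
    have hae : ∀ᵐ w ∂(ν γ), ∀ i, 0 ≤ w i := by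
      rw [hν γ, MeasureTheory.ae_all_iff]
      intro i
      rw [MeasureTheory.ae_iff]
      have hset : {w : Fin N → ℝ | ¬ 0 ≤ w i} = Function.eval i ⁻¹' Set.Iio 0 := by
        ext w; simp [not_le]
      rw [hset]
      exact Measure.pi_eval_preimage_null _ (helper_expMeasure_Iio_zero _)
    -- numerator bound
    set num : ℝ := ∫ w : Fin N → ℝ, Set.indicator S (fun w => L γ w ^ 2) w ∂(ν γ) with hnumdef
    have hCnn : (0:ℝ) ≤ A ^ 2 * Real.exp (2 * N) := by positivity
    have hnum : num ≤ A ^ 2 * Real.exp (2 * N) := by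
      have h1 : num ≤ |num| := le_abs_self _
      have h2 : |num| ≤ (∫⁻ w, ENNReal.ofReal
          ‖Set.indicator S (fun w => L γ w ^ 2) w‖ ∂(ν γ)).toReal := by
        rw [← Real.norm_eq_abs]
        exact norm_integral_le_lintegral_norm _
      have h3 : (∫⁻ w, ENNReal.ofReal
          ‖Set.indicator S (fun w => L γ w ^ 2) w‖ ∂(ν γ))
          ≤ ENNReal.ofReal (A ^ 2 * Real.exp (2 * N)) := by
        have hmono : ∫⁻ w, ENNReal.ofReal
            ‖Set.indicator S (fun w => L γ w ^ 2) w‖ ∂(ν γ)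
            ≤ ∫⁻ _, ENNReal.ofReal (A ^ 2 * Real.exp (2 * N)) ∂(ν γ) := by
          apply lintegral_mono_ae
          filter_upwards [hae] with w hw
          by_cases hwS : w ∈ S
          · rw [Set.indicator_of_mem hwS]
            apply ENNReal.ofReal_le_ofReal
            have hLnn : 0 ≤ L γ w := by
              rw [hL]
              exact Finset.prod_nonneg fun i _ =>
                mul_nonneg (hσpos i).le (Real.exp_pos _).le
            rw [Real.norm_eq_abs, abs_of_nonneg (sq_nonneg _)]
            -- rewrite L as A * exp(sum)
            have hLval : L γ w = A * Real.exp (∑ i, (1 / σsq γ i - 1) * w i) := by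
              rw [hL, Real.exp_sum, ← Finset.prod_mul_distrib]
            have hsum : ∑ i, (1 / σsq γ i - 1) * w i ≤ (N : ℝ) := by
              have step1 : ∑ i, (1 / σsq γ i - 1) * w i
                  ≤ ∑ i, (1 / σsq γ i) * w i := by
                apply Finset.sum_le_sum
                intro i _
                have := hw i
                have h1σ : (0:ℝ) < 1 / σsq γ i := one_div_pos.mpr (hσpos i)
                nlinarith
              have step2 : ∀ i, (1 / σsq γ i) * w i = (N / γ) * (lam i * w i) := by
                intro i
                rw [hσ i]
                field_simp
              have step3 : ∑ i, (1 / σsq γ i) * w i = (N / γ) * ∑ i, lam i * w i := by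
                rw [Finset.mul_sum]
                exact Finset.sum_congr rfl fun i _ => step2 i
              have hwS' : ∑ i, lam i * w i ≤ γ := hwS
              have step4 : (N / γ) * ∑ i, lam i * w i ≤ (N / γ) * γ :=
                mul_le_mul_of_nonneg_left hwS' (by positivity)
              have step5 : (N / γ) * γ = (N : ℝ) := by field_simp
              have step6 : ∑ i, (1 / σsq γ i) * w i ≤ (N : ℝ) := by
                rw [step3]
                exact step4.trans_eq step5
              linarith [step1, step6]
            rw [hLval, mul_pow, pow_two (Real.exp _), ← Real.exp_add]
            have : Real.exp (∑ i, (1 / σsq γ i - 1) * w i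
                + ∑ i, (1 / σsq γ i - 1) * w i) ≤ Real.exp (2 * N) := by
              apply Real.exp_le_exp.2
              push_cast
              linarith
            exact mul_le_mul_of_nonneg_left this (by positivity)
          · rw [Set.indicator_of_notMem hwS]
            simp
        calc ∫⁻ w, ENNReal.ofReal ‖Set.indicator S (fun w => L γ w ^ 2) w‖ ∂(ν γ)
            ≤ ∫⁻ _, ENNReal.ofReal (A ^ 2 * Real.exp (2 * N)) ∂(ν γ) := hmono
          _ = ENNReal.ofReal (A ^ 2 * Real.exp (2 * N)) := by
              rw [lintegral_const, measure_univ, mul_one]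
      have h4 : (∫⁻ w, ENNReal.ofReal
          ‖Set.indicator S (fun w => L γ w ^ 2) w‖ ∂(ν γ)).toReal
          ≤ A ^ 2 * Real.exp (2 * N) := by
        calc (∫⁻ w, ENNReal.ofReal ‖Set.indicator S (fun w => L γ w ^ 2) w‖ ∂(ν γ)).toReal
            ≤ (ENNReal.ofReal (A ^ 2 * Real.exp (2 * N))).toReal :=
              ENNReal.toReal_mono ENNReal.ofReal_ne_top h3
          _ = A ^ 2 * Real.exp (2 * N) := ENNReal.toReal_ofReal hCnn
      linarith
    -- denominator bound
    have hPlow : A / 2 ^ N ≤ P γ := by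
      rw [hP]
      set B : Set (Fin N → ℝ) := Set.pi Set.univ fun i => Set.Icc 0 (σsq γ i) with hB
      have hBS : B ⊆ S := by
        intro w hw
        have hwc : ∀ i, w i ∈ Set.Icc 0 (σsq γ i) := fun i => hw i (Set.mem_univ i)
        show ∑ i, lam i * w i ≤ γ
        calc ∑ i, lam i * w i ≤ ∑ i, lam i * σsq γ i := by
              apply Finset.sum_le_sum
              intro i _
              exact mul_le_mul_of_nonneg_left (hwc i).2 (hlam i).le
          _ = ∑ _i : Fin N, γ / N := by
              apply Finset.sum_congr rfl
              intro i _
              have h1 : (N:ℝ) ≠ 0 := hNpos.ne'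
              have h2 : lam i ≠ 0 := (hlam i).ne'
              rw [hσ i]
              field_simp
          _ = γ := by
              rw [Finset.sum_const, Finset.card_univ, Fintype.card_fin, nsmul_eq_mul]
              field_simp
      have hπB : (Measure.pi fun _ : Fin N => expMeasure 1) B
          = ∏ i, expMeasure 1 (Set.Icc 0 (σsq γ i)) := Measure.pi_pi _ _
      have hπBval : (Measure.pi fun _ : Fin N => expMeasure 1) B
          = ENNReal.ofReal (∏ i, (1 - Real.exp (-(σsq γ i)))) := by
        rw [hπB, ENNReal.ofReal_prod_of_nonneg]
        · apply Finset.prod_congr rfl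
          intro i _
          rw [helper_expMeasure_Icc one_pos (hσpos i).le, one_mul]
        · intro i _
          have := (hσpos i).le
          have h := Real.exp_le_one_iff.2 (by linarith : -(σsq γ i) ≤ 0)
          linarith
      have hmle : (Measure.pi fun _ : Fin N => expMeasure 1) B
          ≤ (Measure.pi fun _ : Fin N => expMeasure 1) S := measure_mono hBS
      have hfin : (Measure.pi fun _ : Fin N => expMeasure 1) S ≠ ⊤ := measure_ne_top _ _
      have htr : ∏ i, (1 - Real.exp (-(σsq γ i)))
          ≤ ((Measure.pi fun _ : Fin N => expMeasure 1) S).toReal := by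
        have := ENNReal.toReal_mono hfin (hπBval ▸ hmle)
        rwa [ENNReal.toReal_ofReal (Finset.prod_nonneg fun i _ => by
          have := (hσpos i).le
          have h := Real.exp_le_one_iff.2 (by linarith : -(σsq γ i) ≤ 0)
          linarith)] at this
      have hprodlow : A / 2 ^ N ≤ ∏ i, (1 - Real.exp (-(σsq γ i))) := by
        have : A / 2 ^ N = ∏ i, (σsq γ i / 2) := by
          rw [Finset.prod_div_distrib, Finset.prod_const, Finset.card_univ,
            Fintype.card_fin]
        rw [this]
        apply Finset.prod_le_prod
        · intro i _
          exact div_nonneg (hσpos i).le (by norm_num)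
        · intro i _
          exact helper_one_sub_exp (hσpos i).le (hσle1 i)
      linarith
    have hPpos : 0 < P γ := lt_of_lt_of_le (by positivity) hPlow
    -- combine
    have hden : (A / 2 ^ N) ^ 2 ≤ P γ ^ 2 :=
      pow_le_pow_left₀ (by positivity) hPlow 2
    have hfrac : num / P γ ^ 2 ≤ (A ^ 2 * Real.exp (2 * N)) / (A / 2 ^ N) ^ 2 :=
      div_le_div₀ hCnn hnum (by positivity) hden
    have hval : (A ^ 2 * Real.exp (2 * N)) / (A / 2 ^ N) ^ 2
        = 2 ^ (2 * N) * Real.exp (2 * N) := by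
      have h2N : (A / 2 ^ N) ^ 2 = A ^ 2 / 2 ^ (2 * N) := by
        rw [div_pow, ← pow_mul, mul_comm]
      rw [h2N, div_div_eq_mul_div]
      field_simp
    calc num / P γ ^ 2 ≤ (A ^ 2 * Real.exp (2 * N)) / (A / 2 ^ N) ^ 2 := hfrac
      _ = 2 ^ (2 * N) * Real.exp (2 * N) := hval
  have key0 : ∀ᶠ γ₀ in nhdsWithin (0:ℝ) (Set.Ioi 0),
      (0:ℝ) ≤ (∫ w : Fin N → ℝ,
          Set.indicator {w : Fin N → ℝ | ∑ i, lam i * w i ≤ γ₀}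
            (fun w => L γ₀ w ^ 2) w ∂(ν γ₀)) / P γ₀ ^ 2 :=
    Filter.Eventually.of_forall fun γ₀ => div_nonneg
      (integral_nonneg fun w => Set.indicator_nonneg (fun w _ => sq_nonneg _) w)
      (sq_nonneg _)
  exact Filter.limsup_le_of_le
    (Filter.isCoboundedUnder_le_of_eventually_le _ key0) key
end
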